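/- Let X be a quasi-projective variety over ℂ, D̃ a nonzero effective Cartier divisor on X, p₁ : X × 𝔸¹ → X the trivial line bundle with zero section X₀, and Z the closed subscheme of X × 𝔸¹ with ideal 𝓘_Z = 𝒪(−X₀) + 𝒪(−p₁*D̃). Then the affine modification of X × 𝔸¹ with center (𝓘_Z, p₁*D̃) is isomorphic, as a scheme over X, to the total space of the line bundle associated to 𝒪_X(−D̃), and under this isomorphism the modification morphism corresponds to the X-morphism of line bundles induced by the canonical section of 𝒪_X(D̃) with divisor D̃. -/

import Mathlib

open Polynomial

/-- rendered on an affine chart of the quasi-projective variety `X` over `ℂ`,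
where the nonzero effective Cartier divisor `D̃` has a regular local equation `g`:
`X × 𝔸¹ = Spec A[T]`, the zero section `X₀` is `{T = 0}`, the subscheme
`Z = p₁*D̃ ∩ X₀` has ideal `𝓘_Z = (T, g)`, and the affine modification of `X × 𝔸¹` with
center `(𝓘_Z, p₁*D̃)` — the `A[T]`-algebra `A[T][𝓘_Z/g]` — is, as a scheme over `X`, the
total space of the line bundle `𝒪_X(−D̃)` (trivialized here: `Spec A[S]`), in such a way that
the modification morphism corresponds to the `X`-morphism of line bundles induced by the
canonical section of `𝒪_X(D̃)` with divisor `D̃`, i.e. to `A[T] → A[S], T ↦ g·S`. -/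
theorem affine_modification_of_cylinder_is_line_bundle
    {A : Type*} [CommRing A] [Algebra ℂ A] [IsDomain A]
    (g : A) (hreg : g ∈ nonZeroDivisors A) (hD : Ideal.span {g} ≠ ⊤) :
    ∃ e : (Algebra.adjoin (Polynomial A)
        {x : Localization.Away (Polynomial.C g : Polynomial A) |
          ∃ b ∈ Ideal.span {(Polynomial.X : Polynomial A), Polynomial.C g},
            algebraMap (Polynomial A) (Localization.Away (Polynomial.C g : Polynomial A))
              (Polynomial.C g) * x =
            algebraMap (Polynomial A) (Localization.Away (Polynomial.C g : Polynomial A)) b})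
      ≃ₐ[A] Polynomial A,
      e (algebraMap (Polynomial A) _ Polynomial.X) = Polynomial.C g * Polynomial.X := by
  have hg : g ≠ 0 := by
    rintro rfl
    exact one_ne_zero (hreg.2 1 (mul_zero 1))
  set L := Localization.Away (C g : A[X]) with hL
  have hCg : (C g : A[X]) ≠ 0 := by simpa using hg
  have hle : Submonoid.powers (C g : A[X]) ≤ nonZeroDivisors A[X] :=
    Submonoid.powers_le.mpr (mem_nonZeroDivisors_of_ne_zero hCg)
  have hinj : Function.Injective (algebraMap A[X] L) := IsLocalization.injective _ hle
  set s : L := IsLocalization.mk' L (X : A[X]) ⟨C g, Submonoid.mem_powers _⟩ with hsdef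
  have hs : algebraMap A[X] L (C g) * s = algebraMap A[X] L X := by
    rw [mul_comm]; exact IsLocalization.mk'_spec L X ⟨C g, Submonoid.mem_powers _⟩
  set ψ : A[X] →ₐ[A] L := aeval s with hψ
  have hψX : ψ X = s := aeval_X s
  have hCmap : ∀ a : A, algebraMap A L a = algebraMap A[X] L (C a) := by
    intro a
    rw [IsScalarTower.algebraMap_apply A A[X] L, Polynomial.algebraMap_eq]
  have hcomp : ∀ p : A[X], ψ (aeval (C g * X) p) = algebraMap A[X] L p := by
    intro p
    have h : (ψ.comp (aeval (C g * X) : A[X] →ₐ[A] A[X])) =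
        IsScalarTower.toAlgHom A A[X] L := by
      apply Polynomial.algHom_ext
      simp only [AlgHom.comp_apply, aeval_X, map_mul, hψ, aeval_C]
      rw [hCmap g, hs]
      rfl
    exact DFunLike.congr_fun h p
  -- injectivity of ψ
  have hinjψ : Function.Injective ψ := by
    rw [injective_iff_map_eq_zero]
    intro p hp
    have key : algebraMap A[X] L (p.scaleRoots g) = 0 := by
      have h1 := Polynomial.scaleRoots_eval₂_mul (R := L) (S := A)
        ((algebraMap A[X] L).comp Polynomial.C) s g (p := p)
      have h2 : eval₂ ((algebraMap A[X] L).comp Polynomial.C) s p = 0 := hp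
      have h3 : ((algebraMap A[X] L).comp Polynomial.C) g * s = algebraMap A[X] L X := hs
      rw [h3, h2, mul_zero] at h1
      calc algebraMap A[X] L (p.scaleRoots g)
          = eval₂ ((algebraMap A[X] L).comp Polynomial.C) (algebraMap A[X] L X)
              (p.scaleRoots g) := by
            rw [← Polynomial.hom_eval₂, Polynomial.eval₂_C_X]
        _ = 0 := h1
    have h0 : p.scaleRoots g = 0 := hinj (by simpa using key)
    ext i
    have := congrArg (fun q => Polynomial.coeff q i) h0
    simp only [Polynomial.coeff_scaleRoots, Polynomial.coeff_zero] at this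
    rcases mul_eq_zero.mp this with h | h
    · simpa using h
    · exact absurd h (pow_ne_zero _ hg)
  -- the set
  set Sset : Set L := {x : L |
      ∃ b ∈ Ideal.span {(X : A[X]), C g},
        algebraMap A[X] L (C g) * x = algebraMap A[X] L b} with hSset
  have hunit : IsUnit (algebraMap A[X] L (C g)) :=
    IsLocalization.map_units L ⟨C g, Submonoid.mem_powers _⟩
  -- S' : Subalgebra A[X] L with carrier ψ.range
  set S' : Subalgebra A[X] L :=
    { toSubsemiring := ψ.range.toSubsemiring,
      algebraMap_mem' := fun p => ⟨aeval (C g * X) p, hcomp p⟩ } with hS'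
  have hSsub : Sset ⊆ S' := by
    rintro x ⟨b, hb, hbx⟩
    obtain ⟨u, v, huv⟩ := Ideal.mem_span_pair.mp hb
    refine ⟨aeval (C g * X) u * X + aeval (C g * X) v, ?_⟩
    show ψ (aeval (C g * X) u * X + aeval (C g * X) v) = x
    apply hunit.mul_left_cancel
    rw [hbx, ← huv, map_add (algebraMap A[X] L), map_mul, map_mul, ← hs,
      map_add ψ, map_mul ψ, hcomp, hcomp, hψX]
    ring
  have hrange : ψ.range =
      (Algebra.adjoin A[X] Sset).restrictScalars A := by
    apply le_antisymm
    · have h : ψ.range = Algebra.adjoin A {s} := by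
        rw [Algebra.adjoin_singleton_eq_range_aeval]
      rw [h]
      apply Algebra.adjoin_le
      simp only [Set.singleton_subset_iff, SetLike.mem_coe, Subalgebra.mem_restrictScalars]
      exact Algebra.subset_adjoin ⟨X, Ideal.subset_span (by simp), hs⟩
    · intro x hx
      rw [Subalgebra.mem_restrictScalars] at hx
      exact (Algebra.adjoin_le hSsub : Algebra.adjoin A[X] Sset ≤ S') hx
  -- build the equivalence
  set ψe : A[X] ≃ₐ[A] ψ.range := AlgEquiv.ofInjective ψ hinjψ with hψe
  refine ⟨(Subalgebra.equivOfEq _ _ hrange.symm).trans ψe.symm, ?_⟩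
  refine (AlgEquiv.symm_apply_eq ψe).mpr ?_
  apply Subtype.ext
  have hfin : ψ (C g * X) = algebraMap A[X] L X := by
    rw [map_mul, hψX, hψ, aeval_C, hCmap g, hs]
  rw [hψe, AlgEquiv.ofInjective_apply, hfin]
  rfl
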